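/- Let a ∈ ℝ^N, Φ(μ) := ⟨a, μ⟩, C ∈ ℝ^{N×N} symmetric, ε > 0, Γ := exp(−C/(2ε)) entrywise, ζ ∈ Δ^{N−1} with strictly positive entries, and α > 0. Then the vector μ* := exp(−a/(αε)) ⊙ (Γᵀ (ζ ⊘ (Γ exp(−a/(αε))))) , after noting it has nonnegative entries summing to 1, is the unique minimizer over μ ∈ Δ^{N−1} of the entropy-regularized Wasserstein proximal objective min_{M ∈ Π_N(μ,ζ)} ⟨(1/2)C + ε log M, M⟩ + (1/α)⟨a, μ⟩. In other words, the Sinkhorn-regularized Wasserstein proximal operator of a linear functional admits this closed form. -/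

import Mathlib

open Finset

noncomputable def ent (x : ℝ) : ℝ := if x = 0 then 0 else x * Real.log x

def transportPolytope {N : ℕ} (ξ η : Fin N → ℝ) : Set (Matrix (Fin N) (Fin N) ℝ) :=
  {M | (∀ i j, 0 ≤ M i j) ∧ (∀ i, ∑ j, M i j = ξ i) ∧ (∀ j, ∑ i, M i j = η j)}

noncomputable def entropicObjective {N : ℕ} (C : Matrix (Fin N) (Fin N) ℝ) (ε : ℝ)
    (M : Matrix (Fin N) (Fin N) ℝ) : ℝ :=
  ∑ i, ∑ j, ((1 / 2) * C i j * M i j + ε * ent (M i j))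

/-- The Sinkhorn-regularized Wasserstein proximal objective of the linear functional
`μ ↦ ⟨a, μ⟩`: entropic transport cost from `μ` to `ζ` plus `(1/α)⟨a, μ⟩`. -/
noncomputable def proxObjective {N : ℕ} (C : Matrix (Fin N) (Fin N) ℝ) (ε α : ℝ)
    (a ζ : Fin N → ℝ) (μ : Fin N → ℝ) : ℝ :=
  sInf {c : ℝ | ∃ M ∈ transportPolytope μ ζ, c = entropicObjective C ε M}
    + (1 / α) * ∑ j, a j * μ j

/-- The closed-form candidate
`μ* = exp(−a/(αε)) ⊙ (Γᵀ (ζ ⊘ (Γ exp(−a/(αε)))))`. -/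
noncomputable def muStar {N : ℕ} (Γ : Matrix (Fin N) (Fin N) ℝ) (ε α : ℝ)
    (a ζ : Fin N → ℝ) : Fin N → ℝ :=
  fun j => Real.exp (-(a j) / (α * ε)) *
    (∑ i, Γ i j * (ζ i / (∑ l, Γ i l * Real.exp (-(a l) / (α * ε)))))

lemma ent_eq (x : ℝ) : ent x = x * Real.log x := by
  unfold ent; split <;> simp_all

lemma continuous_ent : Continuous ent := by
  have h : ent = fun x => x * Real.log x := funext ent_eq
  rw [h]; exact Real.continuous_mul_log

lemma gap_nonneg {q x : ℝ} (hq : 0 < q) (hx : 0 ≤ x) :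
    x - q ≤ x * Real.log x - x * Real.log q := by
  rcases eq_or_lt_of_le hx with h | h
  · rw [← h]; simp; linarith
  · have h1 : Real.log (q / x) ≤ q / x - 1 := Real.log_le_sub_one_of_pos (by positivity)
    have h2 : Real.log (q / x) = Real.log q - Real.log x := Real.log_div hq.ne' h.ne'
    rw [h2] at h1
    have h3 : x * (Real.log q - Real.log x) ≤ x * (q / x - 1) :=
      mul_le_mul_of_nonneg_left h1 hx
    have h4 : x * (q / x - 1) = q - x := by field_simp
    rw [h4, mul_sub] at h3; linarith

lemma gap_eq {q x : ℝ} (hq : 0 < q) (hx : 0 ≤ x)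
    (h : x * Real.log x - x * Real.log q - (x - q) = 0) : x = q := by
  by_contra hne
  rcases eq_or_lt_of_le hx with h0 | h0
  · rw [← h0] at h; simp at h; linarith
  · have hne1 : q / x ≠ 1 := by
      intro hc; exact hne ((div_eq_one_iff_eq h0.ne').mp hc).symm
    have h1 : Real.log (q / x) < q / x - 1 := Real.log_lt_sub_one_of_pos (by positivity) hne1
    have h2 : Real.log (q / x) = Real.log q - Real.log x := Real.log_div hq.ne' h0.ne'
    rw [h2] at h1
    have h3 : x * (Real.log q - Real.log x) < x * (q / x - 1) :=
      (mul_lt_mul_iff_right₀ h0).mpr h1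
    have h4 : x * (q / x - 1) = q - x := by field_simp
    rw [h4, mul_sub] at h3; linarith

lemma isCompact_transportPolytope {N : ℕ} (μ ζ : Fin N → ℝ) (hμ : μ ∈ stdSimplex ℝ (Fin N)) :
    IsCompact (transportPolytope μ ζ) := by
  have hev : ∀ i j : Fin N, Continuous fun M : Matrix (Fin N) (Fin N) ℝ => M i j :=
    fun i j => (continuous_apply j).comp (continuous_apply i)
  have hsub : transportPolytope μ ζ ⊆
      Set.univ.pi fun _ : Fin N => Set.univ.pi fun _ : Fin N => Set.Icc (0:ℝ) 1 := by
    rintro M ⟨h0, h1, _⟩ i _ j _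
    refine ⟨h0 i j, ?_⟩
    calc M i j ≤ ∑ k, M i k := Finset.single_le_sum (fun k _ => h0 i k) (Finset.mem_univ j)
      _ = μ i := h1 i
      _ ≤ ∑ k, μ k := Finset.single_le_sum (fun k _ => hμ.1 k) (Finset.mem_univ i)
      _ = 1 := hμ.2
  have hcl : IsClosed (transportPolytope μ ζ) := by
    have he : transportPolytope μ ζ =
        (⋂ i, ⋂ j, {M : Matrix (Fin N) (Fin N) ℝ | 0 ≤ M i j}) ∩
        ((⋂ i, {M : Matrix (Fin N) (Fin N) ℝ | ∑ j, M i j = μ i}) ∩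
         (⋂ j, {M : Matrix (Fin N) (Fin N) ℝ | ∑ i, M i j = ζ j})) := by
      ext M
      simp [transportPolytope, Set.mem_iInter, and_assoc]
    rw [he]
    refine IsClosed.inter ?_ (IsClosed.inter ?_ ?_)
    · exact isClosed_iInter fun i => isClosed_iInter fun j =>
        isClosed_le continuous_const (hev i j)
    · exact isClosed_iInter fun i =>
        isClosed_eq (continuous_finset_sum _ fun j _ => hev i j) continuous_const
    · exact isClosed_iInter fun j =>
        isClosed_eq (continuous_finset_sum _ fun i _ => hev i j) continuous_const
  exact IsCompact.of_isClosed_subset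
    (isCompact_univ_pi fun _ => isCompact_univ_pi fun _ => isCompact_Icc) hcl hsub

lemma continuous_entropicObjective {N : ℕ} (C : Matrix (Fin N) (Fin N) ℝ) (ε : ℝ) :
    Continuous (entropicObjective C ε) := by
  unfold entropicObjective
  refine continuous_finset_sum _ fun i _ => continuous_finset_sum _ fun j _ => ?_
  have hev : Continuous fun M : Matrix (Fin N) (Fin N) ℝ => M i j :=
    (continuous_apply j).comp (continuous_apply i)
  exact (continuous_const.mul hev).add (continuous_const.mul (continuous_ent.comp hev))

/-- The Sinkhorn-regularized Wasserstein proximal operator of a linear functional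
admits the closed form `μ*`, which is the unique minimizer over the simplex. -/
theorem sinkhorn_prox_of_linear {N d : ℕ} (θ : Fin N → EuclideanSpace ℝ (Fin d))
    (C : Matrix (Fin N) (Fin N) ℝ) (hC : ∀ i j, C i j = ‖θ i - θ j‖ ^ 2)
    (ε α : ℝ) (hε : 0 < ε) (hα : 0 < α)
    (Γ : Matrix (Fin N) (Fin N) ℝ) (hΓ : ∀ i j, Γ i j = Real.exp (-(C i j) / (2 * ε)))
    (a ζ : Fin N → ℝ) (hζ : ζ ∈ stdSimplex ℝ (Fin N)) (hζpos : ∀ j, 0 < ζ j) :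
    muStar Γ ε α a ζ ∈ stdSimplex ℝ (Fin N) ∧
    (∀ μ ∈ stdSimplex ℝ (Fin N),
      proxObjective C ε α a ζ (muStar Γ ε α a ζ) ≤ proxObjective C ε α a ζ μ) ∧
    (∀ μ ∈ stdSimplex ℝ (Fin N),
      (∀ μ' ∈ stdSimplex ℝ (Fin N), proxObjective C ε α a ζ μ ≤ proxObjective C ε α a ζ μ') →
      μ = muStar Γ ε α a ζ) := by
  classical
  -- Positivity facts
  have hΓpos : ∀ i j, 0 < Γ i j := fun i j => by rw [hΓ]; exact Real.exp_pos _
  have hΓsymm : ∀ i j, Γ i j = Γ j i := fun i j => by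
    rw [hΓ, hΓ, hC, hC, norm_sub_rev]
  set β : Fin N → ℝ := fun i => Real.exp (-(a i) / (α * ε)) with hβdef
  have hβpos : ∀ i, 0 < β i := fun i => Real.exp_pos _
  set W : Fin N → ℝ := fun i => ∑ l, Γ i l * β l with hWdef
  have hWpos : ∀ i, 0 < W i := by
    intro i
    have hne : (Finset.univ : Finset (Fin N)).Nonempty := ⟨i, Finset.mem_univ i⟩
    exact Finset.sum_pos (fun l _ => mul_pos (hΓpos i l) (hβpos l)) hne
  set Q : Matrix (Fin N) (Fin N) ℝ := fun i j => (ζ j / W j) * (Γ i j * β i) with hQdef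
  have hQpos : ∀ i j, 0 < Q i j :=
    fun i j => mul_pos (div_pos (hζpos j) (hWpos j)) (mul_pos (hΓpos i j) (hβpos i))
  -- column sums of Q
  have hQcol : ∀ j, ∑ i, Q i j = ζ j := by
    intro j
    have h1 : ∑ i, Q i j = (ζ j / W j) * ∑ i, Γ j i * β i := by
      rw [Finset.mul_sum]
      exact Finset.sum_congr rfl fun i _ => by simp only [hQdef]; rw [hΓsymm i j]
    rw [h1]
    have : (∑ i, Γ j i * β i) = W j := rfl
    rw [this, div_mul_cancel₀ _ (hWpos j).ne']
  -- row sums of Q equal muStar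
  have hQrow : ∀ i, ∑ j, Q i j = muStar Γ ε α a ζ i := by
    intro i
    have h1 : muStar Γ ε α a ζ i = β i * ∑ k, Γ k i * (ζ k / W k) := rfl
    rw [h1, Finset.mul_sum]
    exact Finset.sum_congr rfl fun j _ => by rw [hΓsymm j i]; ring
  have hQmem : Q ∈ transportPolytope (muStar Γ ε α a ζ) ζ :=
    ⟨fun i j => (hQpos i j).le, hQrow, hQcol⟩
  -- membership of muStar in the simplex
  have hmuStar : muStar Γ ε α a ζ ∈ stdSimplex ℝ (Fin N) := by
    constructor
    · intro i
      rw [← hQrow i]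
      exact Finset.sum_nonneg fun j _ => (hQpos i j).le
    · have : ∑ i, muStar Γ ε α a ζ i = ∑ i, ∑ j, Q i j :=
        Finset.sum_congr rfl fun i _ => (hQrow i).symm
      rw [this, Finset.sum_comm]
      have : ∑ j, ∑ i, Q i j = ∑ j, ζ j := Finset.sum_congr rfl fun j _ => hQcol j
      rw [this, hζ.2]
  -- the full objective Ψ
  set Ψ : Matrix (Fin N) (Fin N) ℝ → ℝ := fun M =>
    ∑ i, ∑ j, ((1/2) * C i j * M i j + ε * (M i j * Real.log (M i j)) + (1/α) * a i * M i j)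
    with hΨdef
  set B : ℝ := ε * ∑ j, (Real.log (ζ j) - Real.log (W j)) * ζ j with hBdef
  -- per-entry key identity
  have hkey : ∀ (i j : Fin N) (x : ℝ),
      (1/2) * C i j * x + ε * (x * Real.log x) + (1/α) * a i * x
        = ε * (x * Real.log x - x * Real.log (Q i j))
          + ε * (Real.log (ζ j) - Real.log (W j)) * x := by
    intro i j x
    have hlogΓ : Real.log (Γ i j) = -(C i j) / (2 * ε) := by rw [hΓ, Real.log_exp]
    have hlogβ : Real.log (β i) = -(a i) / (α * ε) := Real.log_exp _
    have hlogQ : Real.log (Q i j)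
        = Real.log (ζ j) - Real.log (W j) + (Real.log (Γ i j) + Real.log (β i)) := by
      rw [hQdef]
      rw [Real.log_mul (div_pos (hζpos j) (hWpos j)).ne' (mul_pos (hΓpos i j) (hβpos i)).ne',
        Real.log_div (hζpos j).ne' (hWpos j).ne',
        Real.log_mul (hΓpos i j).ne' (hβpos i).ne']
    rw [hlogQ, hlogΓ, hlogβ]
    field_simp
    ring
  -- bridge: Ψ = entropicObjective + linear part, on the polytope
  have hbridge : ∀ (μ : Fin N → ℝ) (M : Matrix (Fin N) (Fin N) ℝ),
      M ∈ transportPolytope μ ζ →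
      Ψ M = entropicObjective C ε M + (1/α) * ∑ j, a j * μ j := by
    intro μ M hM
    have hlin : (1/α) * ∑ j, a j * μ j = ∑ i, ∑ j, (1/α) * a i * M i j := by
      rw [Finset.mul_sum]
      refine Finset.sum_congr rfl fun i _ => ?_
      rw [← hM.2.1 i, Finset.mul_sum, Finset.mul_sum]
      exact Finset.sum_congr rfl fun j _ => by ring
    rw [hlin, hΨdef, entropicObjective, ← Finset.sum_add_distrib]
    refine Finset.sum_congr rfl fun i _ => ?_
    rw [← Finset.sum_add_distrib]
    exact Finset.sum_congr rfl fun j _ => by rw [ent_eq]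
  -- identity for matrices with correct column sums
  have hPsiEq : ∀ M : Matrix (Fin N) (Fin N) ℝ, (∀ j, ∑ i, M i j = ζ j) →
      Ψ M = ε * (∑ i, ∑ j, (M i j * Real.log (M i j) - M i j * Real.log (Q i j))) + B := by
    intro M hcol
    have h1 : Ψ M = ∑ i, ∑ j, (ε * (M i j * Real.log (M i j) - M i j * Real.log (Q i j))
        + ε * (Real.log (ζ j) - Real.log (W j)) * M i j) := by
      rw [hΨdef]
      exact Finset.sum_congr rfl fun i _ => Finset.sum_congr rfl fun j _ => hkey i j (M i j)
    rw [h1]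
    have h2 : ∀ i, ∑ j, (ε * (M i j * Real.log (M i j) - M i j * Real.log (Q i j))
        + ε * (Real.log (ζ j) - Real.log (W j)) * M i j)
        = (∑ j, ε * (M i j * Real.log (M i j) - M i j * Real.log (Q i j)))
          + ∑ j, ε * (Real.log (ζ j) - Real.log (W j)) * M i j :=
      fun i => Finset.sum_add_distrib
    rw [Finset.sum_congr rfl fun i _ => h2 i, Finset.sum_add_distrib]
    congr 1
    · rw [Finset.mul_sum]
      exact Finset.sum_congr rfl fun i _ => by rw [Finset.mul_sum]
    · rw [Finset.sum_comm, hBdef, Finset.mul_sum]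
      refine Finset.sum_congr rfl fun j _ => ?_
      rw [← hcol j, Finset.mul_sum, Finset.mul_sum]
      exact Finset.sum_congr rfl fun i _ => by ring
  -- lower bound and equality case
  have hsumM : ∀ M : Matrix (Fin N) (Fin N) ℝ, (∀ j, ∑ i, M i j = ζ j) →
      ∑ i, ∑ j, (M i j - Q i j) = 0 := by
    intro M hcol
    rw [Finset.sum_comm]
    refine Finset.sum_eq_zero fun j _ => ?_
    rw [Finset.sum_sub_distrib, hcol j, hQcol j, sub_self]
  have hlb : ∀ M : Matrix (Fin N) (Fin N) ℝ, (∀ i j, 0 ≤ M i j) →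
      (∀ j, ∑ i, M i j = ζ j) → B ≤ Ψ M := by
    intro M hnn hcol
    rw [hPsiEq M hcol]
    have h1 : (0:ℝ) ≤ ∑ i, ∑ j, (M i j * Real.log (M i j) - M i j * Real.log (Q i j)) := by
      rw [← hsumM M hcol]
      exact Finset.sum_le_sum fun i _ => Finset.sum_le_sum fun j _ =>
        gap_nonneg (hQpos i j) (hnn i j)
    nlinarith
  have hPsiQ : Ψ Q = B := by
    rw [hPsiEq Q hQcol]
    simp
  have heqcase : ∀ M : Matrix (Fin N) (Fin N) ℝ, (∀ i j, 0 ≤ M i j) →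
      (∀ j, ∑ i, M i j = ζ j) → Ψ M = B → M = Q := by
    intro M hnn hcol hPsi
    have h1 : ∑ i, ∑ j, ((M i j * Real.log (M i j) - M i j * Real.log (Q i j))
        - (M i j - Q i j)) = 0 := by
      have h2 : ∑ i, ∑ j, (M i j * Real.log (M i j) - M i j * Real.log (Q i j)) = 0 := by
        have := hPsiEq M hcol
        rw [hPsi] at this
        have hε' : ε ≠ 0 := hε.ne'
        nlinarith [this]
      rw [Finset.sum_congr rfl fun i (_ : i ∈ Finset.univ) => Finset.sum_sub_distrib _ _,
        Finset.sum_sub_distrib, h2, hsumM M hcol, sub_self]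
    have hnn2 : ∀ i ∈ Finset.univ, (0:ℝ) ≤ ∑ j, ((M i j * Real.log (M i j)
        - M i j * Real.log (Q i j)) - (M i j - Q i j)) := by
      intro i _
      exact Finset.sum_nonneg fun j _ => by
        have := gap_nonneg (hQpos i j) (hnn i j); linarith
    have h3 := (Finset.sum_eq_zero_iff_of_nonneg hnn2).mp h1
    funext i j
    have h4 : ∑ j, ((M i j * Real.log (M i j) - M i j * Real.log (Q i j))
        - (M i j - Q i j)) = 0 := h3 i (Finset.mem_univ i)
    have hnn3 : ∀ j ∈ Finset.univ, (0:ℝ) ≤ (M i j * Real.log (M i j)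
        - M i j * Real.log (Q i j)) - (M i j - Q i j) := fun j _ => by
      have := gap_nonneg (hQpos i j) (hnn i j); linarith
    have h5 := (Finset.sum_eq_zero_iff_of_nonneg hnn3).mp h4 j (Finset.mem_univ j)
    exact gap_eq (hQpos i j) (hnn i j) h5
  -- the admissible-value set for each μ
  set S : (Fin N → ℝ) → Set ℝ := fun μ =>
    {c : ℝ | ∃ M ∈ transportPolytope μ ζ, c = entropicObjective C ε M} with hSdef
  have hSne : ∀ μ ∈ stdSimplex ℝ (Fin N), (S μ).Nonempty := by
    intro μ hμ
    refine ⟨entropicObjective C ε (fun i j => μ i * ζ j), fun i j => μ i * ζ j, ?_, rfl⟩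
    refine ⟨fun i j => mul_nonneg (hμ.1 i) (hζ.1 j), fun i => ?_, fun j => ?_⟩
    · rw [← Finset.mul_sum, hζ.2, mul_one]
    · rw [← Finset.sum_mul, hμ.2, one_mul]
  have hSlb : ∀ (μ : Fin N → ℝ), ∀ c ∈ S μ, B - (1/α) * ∑ j, a j * μ j ≤ c := by
    rintro μ c ⟨M, hM, rfl⟩
    have := hlb M hM.1 hM.2.2
    rw [hbridge μ M hM] at this
    linarith
  have hSbdd : ∀ μ : Fin N → ℝ, BddBelow (S μ) :=
    fun μ => ⟨B - (1/α) * ∑ j, a j * μ j, fun c hc => hSlb μ c hc⟩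
  -- proxObjective lower bound on the simplex
  have hprox_ge : ∀ μ ∈ stdSimplex ℝ (Fin N), B ≤ proxObjective C ε α a ζ μ := by
    intro μ hμ
    have h1 : B - (1/α) * ∑ j, a j * μ j ≤ sInf (S μ) :=
      le_csInf (hSne μ hμ) (hSlb μ)
    rw [proxObjective]
    have : sInf {c : ℝ | ∃ M ∈ transportPolytope μ ζ, c = entropicObjective C ε M}
        = sInf (S μ) := rfl
    rw [this]; linarith
  -- proxObjective at muStar equals B
  have hprox_star : proxObjective C ε α a ζ (muStar Γ ε α a ζ) = B := by
    refine le_antisymm ?_ (hprox_ge _ hmuStar)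
    rw [proxObjective]
    have hle : sInf (S (muStar Γ ε α a ζ)) ≤ entropicObjective C ε Q :=
      csInf_le (hSbdd _) ⟨Q, hQmem, rfl⟩
    have heq : entropicObjective C ε Q
        = B - (1/α) * ∑ j, a j * muStar Γ ε α a ζ j := by
      have := hbridge _ Q hQmem
      rw [hPsiQ] at this; linarith
    have : sInf {c : ℝ | ∃ M ∈ transportPolytope (muStar Γ ε α a ζ) ζ,
        c = entropicObjective C ε M} = sInf (S (muStar Γ ε α a ζ)) := rfl
    rw [this]
    rw [heq] at hle
    linarith
  refine ⟨hmuStar, fun μ hμ => ?_, fun μ hμ hmin => ?_⟩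
  · rw [hprox_star]; exact hprox_ge μ hμ
  · -- uniqueness
    have hB : proxObjective C ε α a ζ μ = B :=
      le_antisymm (by rw [← hprox_star]; exact hmin _ hmuStar) (hprox_ge μ hμ)
    -- attain the infimum by compactness
    obtain ⟨M₀, hM₀, hM₀min⟩ := (isCompact_transportPolytope μ ζ hμ).exists_isMinOn
      ⟨fun i j => μ i * ζ j, fun i j => mul_nonneg (hμ.1 i) (hζ.1 j),
        fun i => by rw [← Finset.mul_sum, hζ.2, mul_one],
        fun j => by rw [← Finset.sum_mul, hμ.2, one_mul]⟩
      (continuous_entropicObjective C ε).continuousOn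
    have hinf : sInf (S μ) = entropicObjective C ε M₀ := by
      refine le_antisymm (csInf_le (hSbdd μ) ⟨M₀, hM₀, rfl⟩) ?_
      refine le_csInf (hSne μ hμ) ?_
      rintro c ⟨M, hM, rfl⟩
      exact hM₀min hM
    have hPsiM0 : Ψ M₀ = B := by
      have h1 : proxObjective C ε α a ζ μ = sInf (S μ) + (1/α) * ∑ j, a j * μ j := rfl
      rw [hB] at h1
      rw [hinf] at h1
      have := hbridge μ M₀ hM₀
      linarith
    have hM0Q : M₀ = Q := heqcase M₀ hM₀.1 hM₀.2.2 hPsiM0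
    funext i
    rw [← hM₀.2.1 i, hM0Q, hQrow i]
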